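/- For every c ∈ (0, 1/3], the integral ∫₀^c sqrt(log(1/ε)) dε is at most (1 + 1/(2 log 3)) · c · sqrt(log(1/c)). -/

import Mathlib

open MeasureTheory Set Real Filter

/-- Integrability of `log(1/ε)` on `Ioc 0 c` for `0 < c ≤ 1`. -/
lemma aux_integrable (c : ℝ) (hc0 : 0 < c) (hc1 : c ≤ 1) :
    IntegrableOn (fun ε : ℝ => Real.log (1/ε)) (Set.Ioc (0:ℝ) c) := by
  have hg : IntegrableOn (fun ε : ℝ => 2 * ε ^ (-(1:ℝ)/2)) (Set.Ioc (0:ℝ) c) := by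
    have := (intervalIntegral.intervalIntegrable_rpow' (a := 0) (b := c)
      (r := -(1:ℝ)/2) (by norm_num)).const_mul 2
    rwa [intervalIntegrable_iff_integrableOn_Ioc_of_le hc0.le] at this
  apply Integrable.mono hg
  · exact (Real.measurable_log.comp (measurable_const.div measurable_id)).aestronglyMeasurable
  · filter_upwards [ae_restrict_mem measurableSet_Ioc] with ε hε
    have hε0 : 0 < ε := hε.1
    have hε1 : ε ≤ 1 := hε.2.trans hc1
    have h1 : (0:ℝ) ≤ Real.log (1/ε) := by
      apply Real.log_nonneg
      rw [le_div_iff₀ hε0]; linarith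
    have hs : 0 < Real.sqrt ε := Real.sqrt_pos.mpr hε0
    have h2 : Real.log (1/ε) ≤ 2 * ε ^ (-(1:ℝ)/2) := by
      have hlog : Real.log (1/Real.sqrt ε) ≤ 1/Real.sqrt ε - 1 :=
        Real.log_le_sub_one_of_pos (by positivity)
      have hsq : Real.log (1/ε) = 2 * Real.log (1/Real.sqrt ε) := by
        rw [one_div, one_div, Real.log_inv, Real.log_inv, Real.log_sqrt hε0.le]
        ring
      have hr : ε ^ (-(1:ℝ)/2) = 1 / Real.sqrt ε := by
        rw [Real.sqrt_eq_rpow, one_div, ← Real.rpow_neg hε0.le]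
        norm_num
      rw [hsq, hr]
      linarith
    rw [Real.norm_eq_abs, Real.norm_eq_abs, abs_of_nonneg h1,
      abs_of_nonneg (by positivity)]
    exact h2

/-- Upper bound on the integral of `log(1/ε)` on `Ioc 0 c`. -/
lemma aux_int_bound (c : ℝ) (hc0 : 0 < c) (hc1 : c ≤ 1) :
    (∫ ε in Set.Ioc (0:ℝ) c, Real.log (1/ε)) ≤ c * (Real.log (1/c) + 1) := by
  set s : ℕ → Set ℝ := fun n => Set.Ioc (c/(n+1)) c with hs
  have hsm : ∀ n, MeasurableSet (s n) := fun n => measurableSet_Ioc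
  have hmono : Monotone s := by
    intro m n hmn
    apply Set.Ioc_subset_Ioc_left
    have hmn' : (m:ℝ) ≤ n := by exact_mod_cast hmn
    apply div_le_div_of_nonneg_left hc0.le (by positivity)
    linarith
  have hun : (⋃ n, s n) = Set.Ioc (0:ℝ) c := by
    ext x
    simp only [Set.mem_iUnion, hs, Set.mem_Ioc]
    constructor
    · rintro ⟨n, h1, h2⟩
      exact ⟨lt_trans (by positivity) h1, h2⟩
    · rintro ⟨hx0, hxc⟩
      obtain ⟨n, hn⟩ := exists_nat_gt (c / x)
      refine ⟨n, ?_, hxc⟩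
      rw [div_lt_iff₀ (by positivity)]
      rw [div_lt_iff₀ hx0] at hn
      nlinarith
  have hint : IntegrableOn (fun ε : ℝ => Real.log (1/ε)) (⋃ n, s n) := by
    rw [hun]; exact aux_integrable c hc0 hc1
  have htend := tendsto_setIntegral_of_monotone hsm hmono hint
  rw [hun] at htend
  apply le_of_tendsto htend
  filter_upwards with n
  set a : ℝ := c / (n + 1) with ha
  have ha0 : 0 < a := by positivity
  have hac : a ≤ c := by
    rw [ha, div_le_iff₀ (by positivity)]
    nlinarith
  have heq : (∫ ε in s n, Real.log (1/ε)) = ∫ ε in Set.Ioc a c, -Real.log ε := by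
    apply setIntegral_congr_fun measurableSet_Ioc
    intro x hx
    simp only [one_div, Real.log_inv]
  rw [heq, ← intervalIntegral.integral_of_le hac, intervalIntegral.integral_neg,
    integral_log]
  have hloga : Real.log a ≤ 0 := Real.log_nonpos ha0.le (hac.trans hc1)
  have hlogc : Real.log (1/c) = -Real.log c := by rw [one_div, Real.log_inv]
  rw [hlogc]
  nlinarith [hloga, ha0.le]

/-- For c ∈ (0,1/3], ∫₀^c √(log(1/ε)) dε ≤ (1 + 1/(2 log 3)) c √(log(1/c)). -/
theorem stmt1 (c : ℝ) (hc : c ∈ Set.Ioc (0:ℝ) (1/3)) :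
    (∫ ε in Set.Ioc (0:ℝ) c, Real.sqrt (Real.log (1/ε))) ≤
      (1 + 1/(2 * Real.log 3)) * c * Real.sqrt (Real.log (1/c)) := by
  obtain ⟨hc0, hc3⟩ := hc
  have hc1 : c ≤ 1 := by linarith
  set L : ℝ := Real.log (1/c) with hL
  have hlog3 : (1:ℝ) < Real.log 3 := by
    have := Real.exp_one_lt_d9
    have h3 : Real.exp 1 < 3 := by linarith
    calc (1:ℝ) = Real.log (Real.exp 1) := (Real.log_exp 1).symm
    _ < Real.log 3 := Real.log_lt_log (Real.exp_pos 1) h3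
  have hL3 : Real.log 3 ≤ L := by
    apply Real.log_le_log (by norm_num)
    rw [le_div_iff₀ hc0]; linarith
  have hL0 : 0 < L := lt_of_lt_of_le (by linarith) hL3
  have hsL : 0 < Real.sqrt L := Real.sqrt_pos.mpr hL0
  have hsL2 : Real.sqrt L * Real.sqrt L = L := Real.mul_self_sqrt hL0.le
  -- the linear majorant
  set g : ℝ → ℝ := fun ε =>
    (Real.sqrt L - L / (2 * Real.sqrt L)) + (1 / (2 * Real.sqrt L)) * Real.log (1/ε) with hg
  have hgint : IntegrableOn g (Set.Ioc (0:ℝ) c) := by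
    apply Integrable.add (integrable_const _)
    exact (aux_integrable c hc0 hc1).const_mul _
  have hmono : (∫ ε in Set.Ioc (0:ℝ) c, Real.sqrt (Real.log (1/ε))) ≤
      ∫ ε in Set.Ioc (0:ℝ) c, g ε := by
    apply integral_mono_of_nonneg
    · filter_upwards with ε using Real.sqrt_nonneg _
    · exact hgint
    · filter_upwards [ae_restrict_mem measurableSet_Ioc] with ε hε
      have hε0 : 0 < ε := hε.1
      have hx0 : (0:ℝ) ≤ Real.log (1/ε) := by
        apply Real.log_nonneg
        rw [le_div_iff₀ hε0]; linarith [hε.2]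
      set x : ℝ := Real.log (1/ε)
      have hsx : Real.sqrt x * Real.sqrt x = x := Real.mul_self_sqrt hx0
      have hamgm : 2 * Real.sqrt L * Real.sqrt x ≤ x + L := by
        nlinarith [sq_nonneg (Real.sqrt x - Real.sqrt L)]
      have : Real.sqrt x ≤ (x + L) / (2 * Real.sqrt L) := by
        rw [le_div_iff₀ (by positivity)]
        nlinarith
      calc Real.sqrt x ≤ (x + L) / (2 * Real.sqrt L) := this
        _ = (Real.sqrt L - L / (2 * Real.sqrt L)) + (1 / (2 * Real.sqrt L)) * x := by
            field_simp
            nlinarith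
  have hvol : (volume (Set.Ioc (0:ℝ) c)).toReal = c := by
    rw [Real.volume_Ioc]
    simp [ENNReal.toReal_ofReal hc0.le]
  have hgval : (∫ ε in Set.Ioc (0:ℝ) c, g ε) =
      (Real.sqrt L - L / (2 * Real.sqrt L)) * c
        + (1 / (2 * Real.sqrt L)) * ∫ ε in Set.Ioc (0:ℝ) c, Real.log (1/ε) := by
    rw [hg, integral_add (integrable_const _) ((aux_integrable c hc0 hc1).const_mul _),
      setIntegral_const, integral_const_mul, measureReal_def, hvol, smul_eq_mul]
    ring
  have hIb := aux_int_bound c hc0 hc1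
  rw [← hL] at hIb
  have hfinal : (Real.sqrt L - L / (2 * Real.sqrt L)) * c
        + (1 / (2 * Real.sqrt L)) * (c * (L + 1)) ≤
      (1 + 1/(2 * Real.log 3)) * c * Real.sqrt L := by
    have key : c / (2 * Real.sqrt L) ≤ 1/(2 * Real.log 3) * c * Real.sqrt L := by
      have h2 : 1/(2 * Real.log 3) * c * Real.sqrt L
          = (c * Real.sqrt L) / (2 * Real.log 3) := by ring
      rw [h2, div_le_div_iff₀ (by positivity) (by positivity)]
      nlinarith [hsL2, mul_nonneg hc0.le (sub_nonneg.mpr hL3)]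
    have expand : (Real.sqrt L - L / (2 * Real.sqrt L)) * c
        + (1 / (2 * Real.sqrt L)) * (c * (L + 1)) = c * Real.sqrt L + c / (2 * Real.sqrt L) := by
      field_simp
      nlinarith
    rw [expand]
    nlinarith [key]
  calc (∫ ε in Set.Ioc (0:ℝ) c, Real.sqrt (Real.log (1/ε)))
      ≤ ∫ ε in Set.Ioc (0:ℝ) c, g ε := hmono
    _ = (Real.sqrt L - L / (2 * Real.sqrt L)) * c
        + (1 / (2 * Real.sqrt L)) * ∫ ε in Set.Ioc (0:ℝ) c, Real.log (1/ε) := hgval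
    _ ≤ (Real.sqrt L - L / (2 * Real.sqrt L)) * c
        + (1 / (2 * Real.sqrt L)) * (c * (L + 1)) := by
          have h := mul_le_mul_of_nonneg_left hIb
            (le_of_lt (by positivity : (0:ℝ) < 1/(2*Real.sqrt L)))
          linarith
    _ ≤ (1 + 1/(2 * Real.log 3)) * c * Real.sqrt L := hfinal
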